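/- Let M be a smooth Minkowski space with compatible semi-inner-product B. Then B satisfies the Lipschitz property if, and only if, for every x ∈ M and all sequences (y_n), (z_n) in M with ‖y_n − z_n‖ → 0, one has |B(x,y_n) − B(x,z_n)| → 0. -/

import Mathlib

open Filter Topology

section Aux

variable {M : Type*} [NormedAddCommGroup M] [NormedSpace ℝ M]

lemma sip_bound (B : M → M → ℝ)
    (hschwartz : ∀ x y : M, (B x y) ^ 2 ≤ B x x * B y y)
    (hcompat : ∀ x : M, ‖x‖ ^ 2 = B x x)
    (u v : M) : B u v ≤ ‖u‖ * ‖v‖ := by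
  have h2 : (B u v) ^ 2 ≤ (‖u‖ * ‖v‖) ^ 2 := by
    rw [mul_pow, hcompat, hcompat]; exact hschwartz u v
  nlinarith [mul_nonneg (norm_nonneg u) (norm_nonneg v)]

lemma sip_abs_bound (B : M → M → ℝ)
    (hsmul : ∀ (c : ℝ) (x y : M), B (c • x) y = c * B x y)
    (hschwartz : ∀ x y : M, (B x y) ^ 2 ≤ B x x * B y y)
    (hcompat : ∀ x : M, ‖x‖ ^ 2 = B x x)
    (u v : M) : |B u v| ≤ ‖u‖ * ‖v‖ := by
  rw [abs_le]
  constructor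
  · have h1 : B ((-1 : ℝ) • u) v ≤ ‖(-1 : ℝ) • u‖ * ‖v‖ := sip_bound B hschwartz hcompat _ v
    rw [hsmul, norm_smul] at h1
    simp at h1
    linarith
  · exact sip_bound B hschwartz hcompat u v

lemma sip_rep (B : M → M → ℝ)
    (hadd : ∀ x y z : M, B (x + y) z = B x z + B y z)
    (hsmul : ∀ (c : ℝ) (x y : M), B (c • x) y = c * B x y)
    (hschwartz : ∀ x y : M, (B x y) ^ 2 ≤ B x x * B y y)
    (hcompat : ∀ x : M, ‖x‖ ^ 2 = B x x)
    (x y : M) (hy : y ≠ 0) (hd : DifferentiableAt ℝ (fun w : M => ‖w‖) y) :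
    B x y = ‖y‖ * fderiv ℝ (fun w : M => ‖w‖) y x := by
  set L := fderiv ℝ (fun w : M => ‖w‖) y with hL
  set g : ℝ → ℝ := fun t => ‖y + t • x‖ with hg
  have hcurve : HasDerivAt (fun t : ℝ => y + t • x) x 0 := by
    simpa using ((hasDerivAt_id (0:ℝ)).smul_const x).const_add y
  have hgd : HasDerivAt g (L x) 0 := by
    have h1 : HasFDerivAt (fun w : M => ‖w‖) L ((fun t : ℝ => y + t • x) 0) := by
      simpa using hd.hasFDerivAt
    exact h1.comp_hasDerivAt 0 hcurve
  have hslope : Tendsto (fun t : ℝ => ‖y‖ * slope g 0 t) (𝓝[≠] (0:ℝ)) (𝓝 (‖y‖ * L x)) :=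
    (hasDerivAt_iff_tendsto_slope.mp hgd).const_mul _
  have key : ∀ t : ℝ, t * B x y ≤ (g t - g 0) * ‖y‖ := by
    intro t
    have h1 : B (y + t • x) y ≤ g t * ‖y‖ := sip_bound B hschwartz hcompat _ y
    have h2 : B (y + t • x) y = ‖y‖ ^ 2 + t * B x y := by
      rw [hadd, hsmul, ← hcompat]
    have h3 : g 0 = ‖y‖ := by simp [hg]
    rw [h3]
    nlinarith [sq_nonneg ‖y‖]
  have hle : B x y ≤ ‖y‖ * L x := by
    have hmono : 𝓝[Set.Ioi (0:ℝ)] 0 ≤ 𝓝[{(0:ℝ)}ᶜ] 0 :=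
      nhdsWithin_mono 0 (fun t ht => ne_of_gt ht)
    refine ge_of_tendsto (hslope.mono_left hmono) ?_
    filter_upwards [self_mem_nhdsWithin] with t (ht : (0:ℝ) < t)
    have hk := key t
    have hs : slope g 0 t = (g t - g 0) / t := by simp [slope_def_field]
    rw [hs, mul_div_assoc', le_div_iff₀ ht]
    nlinarith
  have hge : ‖y‖ * L x ≤ B x y := by
    have hmono : 𝓝[Set.Iio (0:ℝ)] 0 ≤ 𝓝[{(0:ℝ)}ᶜ] 0 :=
      nhdsWithin_mono 0 (fun t ht => ne_of_lt ht)
    refine le_of_tendsto (hslope.mono_left hmono) ?_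
    filter_upwards [self_mem_nhdsWithin] with t (ht : t < (0:ℝ))
    have hk := key t
    have hs : slope g 0 t = (g t - g 0) / t := by simp [slope_def_field]
    rw [hs, mul_div_assoc', div_le_iff_of_neg ht]
    nlinarith
  linarith

lemma sip_zero_right (B : M → M → ℝ)
    (hschwartz : ∀ x y : M, (B x y) ^ 2 ≤ B x x * B y y)
    (hcompat : ∀ x : M, ‖x‖ ^ 2 = B x x)
    (x : M) : B x 0 = 0 := by
  have h0 : B (0 : M) 0 = 0 := by
    have := hcompat (0 : M); simpa using this.symm
  have h := hschwartz x 0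
  rw [h0, mul_zero] at h
  have := sq_nonneg (B x 0)
  have hsq : (B x 0) ^ 2 = 0 := le_antisymm h this
  exact pow_eq_zero_iff two_ne_zero |>.mp hsq

/-- Positive homogeneity of `B` in its second variable, from smoothness. -/
lemma sip_hom (B : M → M → ℝ)
    (hadd : ∀ x y z : M, B (x + y) z = B x z + B y z)
    (hsmul : ∀ (c : ℝ) (x y : M), B (c • x) y = c * B x y)
    (hschwartz : ∀ x y : M, (B x y) ^ 2 ≤ B x x * B y y)
    (hcompat : ∀ x : M, ‖x‖ ^ 2 = B x x)
    (hsmooth : ∀ x : M, x ≠ 0 → DifferentiableAt ℝ (fun y : M => ‖y‖) x)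
    (c : ℝ) (hc : 0 < c) (x y : M) : B x (c • y) = c * B x y := by
  rcases eq_or_ne y 0 with rfl | hy
  · simp [sip_zero_right B hschwartz hcompat]
  · have hcy : c • y ≠ 0 := smul_ne_zero (ne_of_gt hc) hy
    rw [sip_rep B hadd hsmul hschwartz hcompat x (c • y) hcy (hsmooth _ hcy),
      sip_rep B hadd hsmul hschwartz hcompat x y hy (hsmooth _ hy),
      fderiv_norm_smul_pos hc, norm_smul, Real.norm_eq_abs, abs_of_pos hc]
    ring

end Aux

/-- The Lipschitz property holds iff for every x and all sequences
(y_n), (z_n) with ‖y_n − z_n‖ → 0 one has |B(x,y_n) − B(x,z_n)| → 0. -/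
theorem lipschitz_iff_sequences
    {M : Type*} [NormedAddCommGroup M] [NormedSpace ℝ M] [FiniteDimensional ℝ M]
    (B : M → M → ℝ)
    (hadd : ∀ x y z : M, B (x + y) z = B x z + B y z)
    (hsmul : ∀ (c : ℝ) (x y : M), B (c • x) y = c * B x y)
    (hpos : ∀ x : M, 0 ≤ B x x)
    (hdef : ∀ x : M, B x x = 0 → x = 0)
    (hschwartz : ∀ x y : M, (B x y) ^ 2 ≤ B x x * B y y)
    (hcompat : ∀ x : M, ‖x‖ ^ 2 = B x x)
    (hsmooth : ∀ x : M, x ≠ 0 → DifferentiableAt ℝ (fun y : M => ‖y‖) x) :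
    (∀ x : M, ‖x‖ = 1 → ∃ κ : ℝ, ∀ y z : M, ‖y‖ = 1 → ‖z‖ = 1 →
        |B x y - B x z| ≤ κ * ‖y - z‖) ↔
    (∀ (x : M) (y z : ℕ → M),
        Filter.Tendsto (fun n => ‖y n - z n‖) Filter.atTop (nhds 0) →
        Filter.Tendsto (fun n => |B x (y n) - B x (z n)|) Filter.atTop (nhds 0)) := by
  have hom := sip_hom B hadd hsmul hschwartz hcompat hsmooth
  have habs := sip_abs_bound B hsmul hschwartz hcompat
  constructor
  · -- Lipschitz ⇒ sequential
    intro hLip x y z hyz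
    rcases eq_or_ne x 0 with rfl | hx
    · have hB0 : ∀ w : M, B 0 w = 0 := by
        intro w
        have := hsmul 0 0 w
        simpa using this
      simp only [hB0, sub_zero, abs_zero]
      exact tendsto_const_nhds
    · set xh : M := ‖x‖⁻¹ • x with hxh
      have hxh1 : ‖xh‖ = 1 := norm_smul_inv_norm hx
      obtain ⟨κ, hκ⟩ := hLip xh hxh1
      set κ' : ℝ := max κ 0 with hκ'
      have hκ'0 : 0 ≤ κ' := le_max_right κ 0
      set C : ℝ := ‖x‖ * (1 + 2 * κ') with hC
      -- the global Lipschitz estimate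
      have key : ∀ u v : M, |B x u - B x v| ≤ C * ‖u - v‖ := by
        have hxC : ∀ u v : M, ‖x‖ * ‖u - v‖ ≤ C * ‖u - v‖ := by
          intro u v
          have h1 : (1 : ℝ) ≤ 1 + 2 * κ' := by linarith
          rw [hC]
          calc ‖x‖ * ‖u - v‖ = ‖x‖ * 1 * ‖u - v‖ := by ring
            _ ≤ ‖x‖ * (1 + 2 * κ') * ‖u - v‖ := by
                exact mul_le_mul_of_nonneg_right
                  (mul_le_mul_of_nonneg_left h1 (norm_nonneg x)) (norm_nonneg _)
        intro u v
        rcases eq_or_ne u 0 with rfl | hu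
        · have h1 : |B x (0:M) - B x v| = |B x v| := by
            rw [sip_zero_right B hschwartz hcompat]; simp
          have h2 : |B x v| ≤ ‖x‖ * ‖(0:M) - v‖ := by
            simpa using habs x v
          calc |B x (0:M) - B x v| ≤ ‖x‖ * ‖(0:M) - v‖ := by rw [h1]; exact h2
            _ ≤ C * ‖(0:M) - v‖ := hxC 0 v
        rcases eq_or_ne v 0 with rfl | hv
        · have h1 : |B x u - B x (0:M)| = |B x u| := by
            rw [sip_zero_right B hschwartz hcompat]; simp
          have h2 : |B x u| ≤ ‖x‖ * ‖u - (0:M)‖ := by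
            simpa using habs x u
          calc |B x u - B x (0:M)| ≤ ‖x‖ * ‖u - (0:M)‖ := by rw [h1]; exact h2
            _ ≤ C * ‖u - (0:M)‖ := hxC u 0
        -- both nonzero
        set uh : M := ‖u‖⁻¹ • u with huh
        set vh : M := ‖v‖⁻¹ • v with hvh
        have huh1 : ‖uh‖ = 1 := norm_smul_inv_norm hu
        have hvh1 : ‖vh‖ = 1 := norm_smul_inv_norm hv
        have hun : (0:ℝ) < ‖u‖ := norm_pos_iff.mpr hu
        have hvn : (0:ℝ) < ‖v‖ := norm_pos_iff.mpr hv
        -- decompositions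
        have hu' : B x u = ‖u‖ * B x uh := by
          have : (‖u‖ : ℝ) • uh = u := by
            rw [huh, smul_inv_smul₀ (ne_of_gt hun)]
          rw [← this, hom ‖u‖ hun x uh, this]
        have hv' : B x v = ‖v‖ * B x vh := by
          have : (‖v‖ : ℝ) • vh = v := by
            rw [hvh, smul_inv_smul₀ (ne_of_gt hvn)]
          rw [← this, hom ‖v‖ hvn x vh, this]
        have hxdec : ∀ w : M, B x w = ‖x‖ * B xh w := by
          intro w
          have hxx : (‖x‖ : ℝ) • xh = x := by
            rw [hxh, smul_inv_smul₀ (norm_ne_zero_iff.mpr hx)]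
          conv_lhs => rw [← hxx]
          rw [hsmul]
        -- the estimate on unit vectors, with κ'
        have h1 : |B xh uh - B xh vh| ≤ κ' * ‖uh - vh‖ := by
          refine le_trans (hκ uh vh huh1 hvh1) ?_
          exact mul_le_mul_of_nonneg_right (le_max_left κ 0) (norm_nonneg _)
        -- ‖u‖ * ‖uh - vh‖ ≤ 2 ‖u - v‖
        have h2 : ‖u‖ * ‖uh - vh‖ ≤ 2 * ‖u - v‖ := by
          have e1 : (‖u‖ : ℝ) • uh = u := by rw [huh, smul_inv_smul₀ (ne_of_gt hun)]
          have e2 : ‖u‖ * ‖uh - vh‖ = ‖u - (‖u‖ * ‖v‖⁻¹) • v‖ := by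
            rw [← Real.norm_eq_abs] at *
            rw [← norm_smul_of_nonneg (le_of_lt hun), smul_sub, e1, hvh, smul_smul]
          have e3 : ‖u - (‖u‖ * ‖v‖⁻¹) • v‖ ≤ ‖u - v‖ + ‖v - (‖u‖ * ‖v‖⁻¹) • v‖ := by
            have : u - (‖u‖ * ‖v‖⁻¹) • v = (u - v) + (v - (‖u‖ * ‖v‖⁻¹) • v) := by abel
            rw [this]; exact norm_add_le _ _
          have e4 : ‖v - (‖u‖ * ‖v‖⁻¹) • v‖ = |‖v‖ - ‖u‖| := by
            have : v - (‖u‖ * ‖v‖⁻¹) • v = (1 - ‖u‖ * ‖v‖⁻¹) • v := by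
              rw [sub_smul, one_smul]
            rw [this, norm_smul, Real.norm_eq_abs]
            rw [show (1 - ‖u‖ * ‖v‖⁻¹) = (‖v‖ - ‖u‖) * ‖v‖⁻¹ by
              field_simp]
            rw [abs_mul, abs_of_nonneg (inv_nonneg.mpr (le_of_lt hvn))]
            field_simp
          have e5 : |‖v‖ - ‖u‖| ≤ ‖u - v‖ := by
            rw [abs_sub_comm]
            exact abs_norm_sub_norm_le u v
          linarith [e2 ▸ le_trans e3 (by linarith : ‖u - v‖ + ‖v - (‖u‖ * ‖v‖⁻¹) • v‖ ≤ 2 * ‖u - v‖)]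
        have h3 : |B xh vh| ≤ 1 := by
          have := habs xh vh
          rwa [hxh1, hvh1, one_mul] at this
        have h4 : |‖u‖ - ‖v‖| ≤ ‖u - v‖ := abs_norm_sub_norm_le u v
        -- combine
        have e6 : |‖u‖ * B xh uh - ‖v‖ * B xh vh| ≤
            ‖u‖ * |B xh uh - B xh vh| + |‖u‖ - ‖v‖| * |B xh vh| := by
          calc |‖u‖ * B xh uh - ‖v‖ * B xh vh|
              = |‖u‖ * (B xh uh - B xh vh) + (‖u‖ - ‖v‖) * B xh vh| := by ring_nf
            _ ≤ |‖u‖ * (B xh uh - B xh vh)| + |(‖u‖ - ‖v‖) * B xh vh| := abs_add_le _ _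
            _ = ‖u‖ * |B xh uh - B xh vh| + |‖u‖ - ‖v‖| * |B xh vh| := by
                rw [abs_mul, abs_mul, abs_of_nonneg (norm_nonneg u)]
        have e7 : ‖u‖ * |B xh uh - B xh vh| ≤ 2 * κ' * ‖u - v‖ := by
          calc ‖u‖ * |B xh uh - B xh vh| ≤ ‖u‖ * (κ' * ‖uh - vh‖) :=
                mul_le_mul_of_nonneg_left h1 (norm_nonneg u)
            _ = κ' * (‖u‖ * ‖uh - vh‖) := by ring
            _ ≤ κ' * (2 * ‖u - v‖) := mul_le_mul_of_nonneg_left h2 hκ'0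
            _ = 2 * κ' * ‖u - v‖ := by ring
        have e8 : |‖u‖ - ‖v‖| * |B xh vh| ≤ ‖u - v‖ := by
          calc |‖u‖ - ‖v‖| * |B xh vh| ≤ ‖u - v‖ * 1 :=
                mul_le_mul h4 h3 (abs_nonneg _) (norm_nonneg _)
            _ = ‖u - v‖ := mul_one _
        have final : |B x u - B x v| = ‖x‖ * |‖u‖ * B xh uh - ‖v‖ * B xh vh| := by
          rw [hu', hv', hxdec uh, hxdec vh,
            show ‖u‖ * (‖x‖ * B xh uh) - ‖v‖ * (‖x‖ * B xh vh)
              = ‖x‖ * (‖u‖ * B xh uh - ‖v‖ * B xh vh) by ring,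
            abs_mul, abs_of_nonneg (norm_nonneg x)]
        rw [final, hC]
        calc ‖x‖ * |‖u‖ * B xh uh - ‖v‖ * B xh vh|
            ≤ ‖x‖ * (2 * κ' * ‖u - v‖ + ‖u - v‖) := by
              apply mul_le_mul_of_nonneg_left _ (norm_nonneg x)
              linarith
          _ = ‖x‖ * (1 + 2 * κ') * ‖u - v‖ := by ring
      -- squeeze
      refine squeeze_zero (fun n => abs_nonneg _) (fun n => key (y n) (z n)) ?_
      have := hyz.const_mul C
      simpa using this
  · -- sequential ⇒ Lipschitz
    intro hseq
    by_contra hnot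
    push_neg at hnot
    obtain ⟨x, hx, hall⟩ := hnot
    choose Y Z hY hZ hgt using fun n : ℕ => hall ((n : ℝ) + 1)
    have hd : ∀ n : ℕ, (0:ℝ) < ‖Y n - Z n‖ := by
      intro n
      rcases (norm_nonneg (Y n - Z n)).lt_or_eq with h | h
      · exact h
      · exfalso
        have hYZ : Y n = Z n := by
          have := norm_eq_zero.mp h.symm
          exact sub_eq_zero.mp this
        have := hgt n
        rw [hYZ] at this
        simp at this
    set c : ℕ → ℝ := fun n => ((n : ℝ) + 1) * ‖Y n - Z n‖ with hc
    have hcpos : ∀ n, (0:ℝ) < c n := fun n =>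
      mul_pos (by positivity) (hd n)
    set y' : ℕ → M := fun n => (c n)⁻¹ • Y n with hy'
    set z' : ℕ → M := fun n => (c n)⁻¹ • Z n with hz'
    have hnorm : ∀ n, ‖y' n - z' n‖ = 1 / ((n : ℝ) + 1) := by
      intro n
      have : y' n - z' n = (c n)⁻¹ • (Y n - Z n) := by
        rw [hy', hz', smul_sub]
      rw [this, norm_smul, Real.norm_eq_abs, abs_of_pos (inv_pos.mpr (hcpos n)), hc]
      field_simp
      exact div_self (ne_of_gt (hd n))
    have htend : Tendsto (fun n => ‖y' n - z' n‖) atTop (𝓝 0) := by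
      simp only [hnorm]
      exact tendsto_one_div_add_atTop_nhds_zero_nat
    have hres := hseq x y' z' htend
    have hge1 : ∀ n, (1:ℝ) ≤ |B x (y' n) - B x (z' n)| := by
      intro n
      have h1 : B x (y' n) = (c n)⁻¹ * B x (Y n) :=
        hom _ (inv_pos.mpr (hcpos n)) x (Y n)
      have h2 : B x (z' n) = (c n)⁻¹ * B x (Z n) :=
        hom _ (inv_pos.mpr (hcpos n)) x (Z n)
      have h3 : |B x (y' n) - B x (z' n)| = (c n)⁻¹ * |B x (Y n) - B x (Z n)| := by
        rw [h1, h2, ← mul_sub, abs_mul, abs_of_pos (inv_pos.mpr (hcpos n))]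
      rw [h3]
      have h4 : c n < |B x (Y n) - B x (Z n)| := hgt n
      have h5 : (c n)⁻¹ * c n ≤ (c n)⁻¹ * |B x (Y n) - B x (Z n)| :=
        mul_le_mul_of_nonneg_left (le_of_lt h4) (le_of_lt (inv_pos.mpr (hcpos n)))
      rwa [inv_mul_cancel₀ (ne_of_gt (hcpos n))] at h5
    have hev : ∀ᶠ n in atTop, |B x (y' n) - B x (z' n)| < 1 :=
      hres.eventually_lt_const zero_lt_one
    obtain ⟨n, hn⟩ := hev.exists
    linarith [hge1 n]
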